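/- Let M_0, M_1, M_2, M_3 be pairwise edge-disjoint matchings, each with at least one edge, of sizes m_0, m_1, m_2, m_3 respectively, such that M_0 ∪ M_1, M_1 ∪ M_2 and M_2 ∪ M_3 are also matchings. Then for any orderings ℓ_0, ℓ_1, ℓ_2, ℓ_3 of M_0, M_1, M_2, M_3 respectively, ms(ℓ_0 ∨ ℓ_1 ∨ ℓ_2 ∨ ℓ_3) ≥ min{ ms(ℓ_0 ∨ ℓ_2) + m_1, ms(ℓ_1 ∨ ℓ_3) + m_2, ms(ℓ_0 ∨ ℓ_3) + m_1 + m_2 }. -/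

import Mathlib

open SimpleGraph

/-- Two edges are adjacent if they are distinct and share a vertex. -/
def EdgesAdj {V : Type*} (e e' : Sym2 V) : Prop :=
  e ≠ e' ∧ ∃ v : V, v ∈ e ∧ v ∈ e'

/-- `ms` of an ordering of a graph, the ordering being given as the list of edges
in increasing label order: the largest `s ∈ {1,…,m}` such that any ordered pair of
adjacent edges `(e,e')` with `ℓ(e) < ℓ(e')` has forward distance at least `s`. -/
noncomputable def msList {V : Type*} (L : List (Sym2 V)) : ℕ :=
  sSup {s | 1 ≤ s ∧ s ≤ L.length ∧ ∀ i j e e', i < j →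
    L[i]? = some e → L[j]? = some e' → EdgesAdj e e' → s ≤ j - i}

/-- `cms` of an ordering of a graph: the largest `s ∈ {1,…,m}` such that every pair of
adjacent edges is at cyclic distance at least `s`. -/
noncomputable def cmsList {V : Type*} (L : List (Sym2 V)) : ℕ :=
  sSup {s | 1 ≤ s ∧ s ≤ L.length ∧ ∀ i j e e', i < j →
    L[i]? = some e → L[j]? = some e' → EdgesAdj e e' →
    s ≤ min (j - i) (L.length - (j - i))}

/-- `L` is an ordering of `G`: it lists every edge of `G` exactly once. -/
def IsOrdering {V : Type*} (G : SimpleGraph V) (L : List (Sym2 V)) : Prop :=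
  L.Nodup ∧ ∀ e, e ∈ L ↔ e ∈ G.edgeSet

/-- Cyclic matching sequenceability of a graph: the maximum of `cmsList` over orderings. -/
noncomputable def cms {V : Type*} (G : SimpleGraph V) : ℕ :=
  sSup {k | ∃ L, IsOrdering G L ∧ cmsList L = k}

/-- Number of edges of a graph. -/
noncomputable def numEdges {V : Type*} (G : SimpleGraph V) : ℕ :=
  Nat.card G.edgeSet

/-- The chromatic index: the least number of colours in a proper edge colouring. -/
noncomputable def chromaticIndex {V : Type*} (G : SimpleGraph V) : ℕ :=
  sInf {c | ∃ f : G.edgeSet → Fin c, ∀ e e' : G.edgeSet, EdgesAdj e.1 e'.1 → f e ≠ f e'}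

/-- The edge set of `G` forms a matching (no two distinct edges share a vertex). -/
def IsMatchingGraph {V : Type*} (G : SimpleGraph V) : Prop :=
  ∀ e ∈ G.edgeSet, ∀ e' ∈ G.edgeSet, ¬ EdgesAdj e e'

/-- `G` is regular of degree `d`. -/
def IsRegularGraph {V : Type*} (G : SimpleGraph V) (d : ℕ) : Prop :=
  ∀ v : V, Nat.card (G.neighborSet v) = d

/-- A finite set of edges of `G` forming a matching. -/
def IsMatchingSet {V : Type*} (G : SimpleGraph V) (M : Finset (Sym2 V)) : Prop :=
  ↑M ⊆ G.edgeSet ∧ ∀ e ∈ M, ∀ e' ∈ M, ¬ EdgesAdj e e'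

/-- The matching number of a graph. -/
noncomputable def matchingNumber {V : Type*} (G : SimpleGraph V) : ℕ :=
  sSup {k | ∃ M : Finset (Sym2 V), IsMatchingSet G M ∧ M.card = k}
private lemma le_msList' {V : Type*} {L : List (Sym2 V)} {s : ℕ}
    (h1 : 1 ≤ s) (h2 : s ≤ L.length)
    (h3 : ∀ i j e e', i < j → L[i]? = some e → L[j]? = some e' → EdgesAdj e e' → s ≤ j - i) :
    s ≤ msList L :=
  le_csSup ⟨L.length, fun _ hx => hx.2.1⟩ ⟨h1, h2, h3⟩

private lemma msList_spec' {V : Type*} {L : List (Sym2 V)} (h : 1 ≤ L.length) :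
    1 ≤ msList L ∧ msList L ≤ L.length ∧
    ∀ i j e e', i < j → L[i]? = some e → L[j]? = some e' → EdgesAdj e e' →
      msList L ≤ j - i := by
  have hmem := Nat.sSup_mem (s := {s | 1 ≤ s ∧ s ≤ L.length ∧ ∀ i j e e', i < j →
      L[i]? = some e → L[j]? = some e' → EdgesAdj e e' → s ≤ j - i})
    ⟨1, le_refl 1, h, fun i j _ _ hij _ _ _ => by omega⟩
    ⟨L.length, fun _ hx => hx.2.1⟩
  exact hmem

private lemma get4' {α : Type*} (A B C D : List α) {i : ℕ} {e : α}
    (h : (A ++ B ++ C ++ D)[i]? = some e) :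
    (i < A.length ∧ A[i]? = some e)
    ∨ (A.length ≤ i ∧ i < A.length + B.length ∧ B[i - A.length]? = some e)
    ∨ (A.length + B.length ≤ i ∧ i < A.length + B.length + C.length ∧
        C[i - (A.length + B.length)]? = some e)
    ∨ (A.length + B.length + C.length ≤ i ∧
        i < A.length + B.length + C.length + D.length ∧
        D[i - (A.length + B.length + C.length)]? = some e) := by
  have hlen : i < A.length + B.length + C.length + D.length := by
    by_contra hc
    rw [List.getElem?_eq_none (by simp only [List.length_append]; omega)] at h
    cases h
  by_cases h1 : i < A.length
  · left
    rw [List.getElem?_append_left (by simp only [List.length_append]; omega),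
      List.getElem?_append_left (by simp only [List.length_append]; omega),
      List.getElem?_append_left h1] at h
    exact ⟨h1, h⟩
  by_cases h2 : i < A.length + B.length
  · right; left
    rw [List.getElem?_append_left (by simp only [List.length_append]; omega),
      List.getElem?_append_left (by simp only [List.length_append]; omega),
      List.getElem?_append_right (by omega)] at h
    exact ⟨by omega, h2, h⟩
  by_cases h3 : i < A.length + B.length + C.length
  · right; right; left
    rw [List.getElem?_append_left (by simp only [List.length_append]; omega),
      List.getElem?_append_right (by simp only [List.length_append]; omega)] at h
    simp only [List.length_append] at h
    exact ⟨by omega, h3, h⟩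
  · right; right; right
    rw [List.getElem?_append_right (by simp only [List.length_append]; omega)] at h
    simp only [List.length_append] at h
    exact ⟨by omega, hlen, h⟩

/-- Lemma: let `M_0, M_1, M_2, M_3` be pairwise edge-disjoint matchings of sizes
`m_0, m_1, m_2, m_3` such that `M_0 ∪ M_1`, `M_1 ∪ M_2` and `M_2 ∪ M_3` are also
matchings.  Then for any orderings `ℓ_0, ℓ_1, ℓ_2, ℓ_3`,
`ms(ℓ_0 ∨ ℓ_1 ∨ ℓ_2 ∨ ℓ_3) ≥
  min{ms(ℓ_0 ∨ ℓ_2) + m_1, ms(ℓ_1 ∨ ℓ_3) + m_2, ms(ℓ_0 ∨ ℓ_3) + m_1 + m_2}`. -/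
theorem msList_append_four {V : Type*} [Fintype V] (M : Fin 4 → SimpleGraph V)
    (L : Fin 4 → List (Sym2 V))
    (hmatch : ∀ i, IsMatchingGraph (M i))
    (hdisj : ∀ i j, i ≠ j → Disjoint (M i).edgeSet (M j).edgeSet)
    (hne : ∀ i, (M i).edgeSet.Nonempty)
    (h01 : IsMatchingGraph (M 0 ⊔ M 1)) (h12 : IsMatchingGraph (M 1 ⊔ M 2))
    (h23 : IsMatchingGraph (M 2 ⊔ M 3))
    (hL : ∀ i, IsOrdering (M i) (L i)) :
    min (msList (L 0 ++ L 2) + numEdges (M 1))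
      (min (msList (L 1 ++ L 3) + numEdges (M 2))
        (msList (L 0 ++ L 3) + numEdges (M 1) + numEdges (M 2)))
      ≤ msList (L 0 ++ L 1 ++ L 2 ++ L 3) := by
    classical
  have hlenpos : ∀ i, 1 ≤ (L i).length := fun i => by
    obtain ⟨e, he⟩ := hne i
    exact List.length_pos_iff.mpr (List.ne_nil_of_mem (((hL i).2 e).mpr he))
  have hcard : ∀ i, numEdges (M i) = (L i).length := fun i => by
    have hset : (M i).edgeSet = ↑(L i).toFinset := by
      ext e
      simp [← (hL i).2 e]
    rw [numEdges, hset, Nat.card_coe_set_eq, Set.ncard_coe_finset,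
      List.toFinset_card_of_nodup (hL i).1]
  have hmem : ∀ i e, e ∈ L i → e ∈ (M i).edgeSet := fun i e he => ((hL i).2 e).mp he
  set n0 := (L 0).length with hn0
  set n1 := (L 1).length with hn1
  set n2 := (L 2).length with hn2
  set n3 := (L 3).length with hn3
  obtain ⟨h02a, h02b, h02c⟩ := msList_spec' (L := L 0 ++ L 2)
    (by simp only [List.length_append]; have := hlenpos 0; omega)
  obtain ⟨h13a, h13b, h13c⟩ := msList_spec' (L := L 1 ++ L 3)
    (by simp only [List.length_append]; have := hlenpos 1; omega)
  obtain ⟨h03a, h03b, h03c⟩ := msList_spec' (L := L 0 ++ L 3)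
    (by simp only [List.length_append]; have := hlenpos 0; omega)
  simp only [List.length_append] at h02b h13b h03b
  rw [hcard 1, hcard 2]
  set s02 := msList (L 0 ++ L 2)
  set s13 := msList (L 1 ++ L 3)
  set s03 := msList (L 0 ++ L 3)
  apply le_msList'
  · omega
  · simp only [List.length_append]; omega
  · intro i j e e' hij hi hj hadj
    have hsum := fun a b => SimpleGraph.edgeSet_sup (M a) (M b)
    rcases get4' _ _ _ _ hi with ⟨hiA, hie⟩ | ⟨hiA, hiB, hie⟩ | ⟨hiAB, hiC, hie⟩ | ⟨hiABC, hiD, hie⟩ <;>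
      rcases get4' _ _ _ _ hj with ⟨hjA, hje⟩ | ⟨hjA, hjB, hje⟩ | ⟨hjAB, hjC, hje⟩ | ⟨hjABC, hjD, hje⟩
    -- e ∈ L 0
    · exact absurd hadj (hmatch 0 e (hmem 0 e (List.mem_of_getElem? hie))
        e' (hmem 0 e' (List.mem_of_getElem? hje)))
    · exact absurd hadj (h01 e (by rw [hsum 0 1]; exact Or.inl (hmem 0 e (List.mem_of_getElem? hie)))
        e' (by rw [hsum 0 1]; exact Or.inr (hmem 1 e' (List.mem_of_getElem? hje))))
    · -- real case (0,2)
      have hkey := h02c i (j - n1) e e' (by omega)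
        (by rw [List.getElem?_append_left hiA]; exact hie)
        (by rw [List.getElem?_append_right (by omega : (L 0).length ≤ j - n1)]
            have hidx : j - n1 - (L 0).length = j - (n0 + n1) := by omega
            rw [hidx]; exact hje)
        hadj
      omega
    · -- real case (0,3)
      have hkey := h03c i (j - (n1 + n2)) e e' (by omega)
        (by rw [List.getElem?_append_left hiA]; exact hie)
        (by rw [List.getElem?_append_right (by omega : (L 0).length ≤ j - (n1 + n2))]
            have hidx : j - (n1 + n2) - (L 0).length = j - (n0 + n1 + n2) := by omega
            rw [hidx]; exact hje)
        hadj
      omega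
    -- e ∈ L 1
    · omega
    · exact absurd hadj (hmatch 1 e (hmem 1 e (List.mem_of_getElem? hie))
        e' (hmem 1 e' (List.mem_of_getElem? hje)))
    · exact absurd hadj (h12 e (by rw [hsum 1 2]; exact Or.inl (hmem 1 e (List.mem_of_getElem? hie)))
        e' (by rw [hsum 1 2]; exact Or.inr (hmem 2 e' (List.mem_of_getElem? hje))))
    · -- real case (1,3)
      have hkey := h13c (i - n0) (j - (n0 + n2)) e e' (by omega)
        (by rw [List.getElem?_append_left (by omega : i - n0 < (L 1).length)]; exact hie)
        (by rw [List.getElem?_append_right (by omega : (L 1).length ≤ j - (n0 + n2))]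
            have hidx : j - (n0 + n2) - (L 1).length = j - (n0 + n1 + n2) := by omega
            rw [hidx]; exact hje)
        hadj
      omega
    -- e ∈ L 2
    · omega
    · omega
    · exact absurd hadj (hmatch 2 e (hmem 2 e (List.mem_of_getElem? hie))
        e' (hmem 2 e' (List.mem_of_getElem? hje)))
    · exact absurd hadj (h23 e (by rw [hsum 2 3]; exact Or.inl (hmem 2 e (List.mem_of_getElem? hie)))
        e' (by rw [hsum 2 3]; exact Or.inr (hmem 3 e' (List.mem_of_getElem? hje))))
    -- e ∈ L 3
    · omega
    · omega
    · omega
    · exact absurd hadj (hmatch 3 e (hmem 3 e (List.mem_of_getElem? hie))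
        e' (hmem 3 e' (List.mem_of_getElem? hje)))
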